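/- Let ρ be an N-qubit PPT symmetric state. If for some bipartition S|S̄ the partial transpose ρ^{T_S} is not supported on ℂ^{|S|+1} ⊗ ℂ^{N−|S|+1} (i.e., one of its marginals has a nontrivial kernel), then rank(ρ) ≤ N. -/

import Mathlib

open scoped ComplexOrder
set_option linter.unusedSectionVars false
set_option maxHeartbeats 1000000

abbrev QIdx (N : ℕ) := Fin N → Fin 2

def SymmVec {N : ℕ} (ψ : QIdx N → ℂ) : Prop :=
  ∀ σ : Equiv.Perm (Fin N), ∀ f : QIdx N, ψ (f ∘ σ) = ψ f

def SuppSymm {N : ℕ} (ρ : Matrix (QIdx N) (QIdx N) ℂ) : Prop :=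
  ∀ v, SymmVec (ρ.mulVec v)

def ptTrans {N : ℕ} (S : Finset (Fin N)) (ρ : Matrix (QIdx N) (QIdx N) ℂ) :
    Matrix (QIdx N) (QIdx N) ℂ :=
  Matrix.of fun f g =>
    ρ (fun i => if i ∈ S then g i else f i) (fun i => if i ∈ S then f i else g i)

noncomputable def ptrace {N : ℕ} (S : Finset (Fin N)) (ρ : Matrix (QIdx N) (QIdx N) ℂ) :
    Matrix ({i : Fin N // i ∉ S} → Fin 2) ({i : Fin N // i ∉ S} → Fin 2) ℂ :=
  Matrix.of fun x y => ∑ z : ({i : Fin N // i ∈ S} → Fin 2),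
    ρ (fun i => if h : i ∈ S then z ⟨i, h⟩ else x ⟨i, h⟩)
      (fun i => if h : i ∈ S then z ⟨i, h⟩ else y ⟨i, h⟩)

/-! ### Generic facts about the symmetric subspace of `(ι → Fin 2) → ℂ` -/

section Symm

variable {ι : Type*} [Fintype ι] [DecidableEq ι]

/-- Number of ones in a bit string. -/
def cnt (f : ι → Fin 2) : ℕ := (Finset.univ.filter fun i => f i = 1).card

lemma cnt_le (f : ι → Fin 2) : cnt f ≤ Fintype.card ι := by
  classical
  simpa [cnt] using Finset.card_filter_le Finset.univ fun i => f i = 1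

lemma cnt_comp (f : ι → Fin 2) (σ : Equiv.Perm ι) : cnt (f ∘ σ) = cnt f := by
  classical
  unfold cnt
  apply Finset.card_bij (fun i _ => σ i)
  · intro a ha; simp only [Finset.mem_filter, Finset.mem_univ, true_and] at ha ⊢
    exact ha
  · intro a _ b _ h; exact σ.injective h
  · intro b hb
    refine ⟨σ.symm b, ?_, by simp⟩
    simp only [Finset.mem_filter, Finset.mem_univ, true_and, Function.comp] at hb ⊢
    simpa using hb

lemma fin2_eq_zero_of_ne_one : ∀ v : Fin 2, v ≠ 1 → v = 0 := by decide

/-- Two bit strings with the same number of ones are related by a permutation. -/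
lemma exists_perm_of_cnt_eq {f g : ι → Fin 2} (h : cnt f = cnt g) :
    ∃ σ : Equiv.Perm ι, f ∘ σ = g := by
  classical
  have h1 : Fintype.card {i // g i = 1} = Fintype.card {i // f i = 1} := by
    simp only [Fintype.card_subtype]
    exact h.symm
  have h2 : Fintype.card {i // ¬ g i = 1} = Fintype.card {i // ¬ f i = 1} := by
    rw [Fintype.card_subtype_compl, Fintype.card_subtype_compl, h1]
  set e := Fintype.equivOfCardEq h1
  set e' := Fintype.equivOfCardEq h2
  refine ⟨Equiv.subtypeCongr e e', ?_⟩
  funext i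
  by_cases hi : g i = 1
  · have h3 : Equiv.subtypeCongr e e' i = (e ⟨i, hi⟩ : ι) := by
      simp [Equiv.subtypeCongr, hi]
    have : f ((Equiv.subtypeCongr e e') i) = 1 := by
      rw [h3]; exact (e ⟨i, hi⟩).2
    simp [Function.comp, this, hi]
  · have h3 : Equiv.subtypeCongr e e' i = (e' ⟨i, hi⟩ : ι) := by
      simp [Equiv.subtypeCongr, hi]
    have : ¬ f ((Equiv.subtypeCongr e e') i) = 1 := by
      rw [h3]; exact (e' ⟨i, hi⟩).2
    simp only [Function.comp]
    rw [fin2_eq_zero_of_ne_one _ this, fin2_eq_zero_of_ne_one _ hi]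

/-- Representative bit string with `k` ones. -/
noncomputable def rep (k : ℕ) : ι → Fin 2 :=
  fun i => if ((Fintype.equivFin ι) i : ℕ) < k then 1 else 0

lemma cnt_rep {k : ℕ} (hk : k ≤ Fintype.card ι) : cnt (rep (ι := ι) k) = k := by
  classical
  unfold cnt rep
  have h1 : (Finset.univ.filter fun i : ι =>
      (if ((Fintype.equivFin ι) i : ℕ) < k then (1 : Fin 2) else 0) = 1)
      = Finset.univ.filter fun i : ι => ((Fintype.equivFin ι) i : ℕ) < k := by
    apply Finset.filter_congr
    intro i _
    by_cases h : ((Fintype.equivFin ι) i : ℕ) < k <;> simp [h]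
  rw [h1]
  rw [show (Finset.univ.filter fun i : ι => ((Fintype.equivFin ι) i : ℕ) < k).card
      = (Finset.univ : Finset (Fin k)).card from ?_]
  · simp
  apply Finset.card_bij' (fun i hi => (⟨(Fintype.equivFin ι) i, by
      simpa using (Finset.mem_filter.mp hi).2⟩ : Fin k))
    (fun j _ => (Fintype.equivFin ι).symm (Fin.castLE hk j))
  case hi => intro a ha; exact Finset.mem_univ _
  case hj =>
    intro a _
    simp only [Finset.mem_filter, Finset.mem_univ, true_and, Equiv.apply_symm_apply]
    exact a.2
  case left_inv => intro a ha; simp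
  case right_inv => intro a ha; simp [Fin.ext_iff]

lemma exists_rep (f : ι → Fin 2) : ∃ σ : Equiv.Perm ι, rep (cnt f) ∘ σ = f :=
  exists_perm_of_cnt_eq (cnt_rep (cnt_le f))

/-- The symmetric subspace. -/
noncomputable def symmSub (ι : Type*) [Fintype ι] [DecidableEq ι] :
    Submodule ℂ ((ι → Fin 2) → ℂ) where
  carrier := {ψ | ∀ (σ : Equiv.Perm ι) (f : ι → Fin 2), ψ (f ∘ σ) = ψ f}
  add_mem' := by intro a b ha hb σ f; simp [ha σ f, hb σ f]
  zero_mem' := by intro σ f; rfl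
  smul_mem' := by intro c a ha σ f; simp [ha σ f]

lemma finrank_symmSub_le :
    Module.finrank ℂ (symmSub ι) ≤ Fintype.card ι + 1 := by
  classical
  let Φ : symmSub ι →ₗ[ℂ] (Fin (Fintype.card ι + 1) → ℂ) :=
    { toFun := fun ψ k => (ψ : (ι → Fin 2) → ℂ) (rep k)
      map_add' := by intro a b; rfl
      map_smul' := by intro c a; rfl }
  have hinj : Function.Injective Φ := by
    rw [← LinearMap.ker_eq_bot]
    ext ψ
    simp only [LinearMap.mem_ker, Submodule.mem_bot]
    constructor
    · intro hψ
      ext f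
      obtain ⟨σ, hσ⟩ := exists_rep f
      have h1 : (ψ : (ι → Fin 2) → ℂ) f = (ψ : (ι → Fin 2) → ℂ) (rep (cnt f)) := by
        have := ψ.2 σ (rep (cnt f))
        rw [hσ] at this
        exact this
      have h2 := congrFun hψ ⟨cnt f, Nat.lt_succ_of_le (cnt_le f)⟩
      simpa [Φ, h1] using h2
    · intro h; rw [h]; rfl
  calc Module.finrank ℂ (symmSub ι)
      ≤ Module.finrank ℂ (Fin (Fintype.card ι + 1) → ℂ) :=
        LinearMap.finrank_le_finrank_of_injective hinj
    _ = Fintype.card ι + 1 := by simp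

lemma le_finrank_symmSub :
    Fintype.card ι + 1 ≤ Module.finrank ℂ (symmSub ι) := by
  classical
  let v : Fin (Fintype.card ι + 1) → symmSub ι := fun k =>
    ⟨fun f => if cnt f = (k : ℕ) then 1 else 0, by
      intro σ f; simp [cnt_comp f σ]⟩
  have hli : LinearIndependent ℂ v := by
    rw [Fintype.linearIndependent_iff]
    intro c hc k
    have h0 : ((∑ i, c i • v i : symmSub ι) : (ι → Fin 2) → ℂ) (rep (ι := ι) k) = 0 := by
      rw [hc]; rfl
    have hcr : cnt (rep (ι := ι) (k : ℕ)) = (k : ℕ) := cnt_rep (Nat.lt_succ_iff.mp k.2)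
    have : ∑ i, c i * (if (k : ℕ) = (i : ℕ) then (1 : ℂ) else 0) = 0 := by
      simpa [v, hcr] using h0
    rw [Finset.sum_eq_single k (by intro b _ hb; simp [Fin.val_eq_val, (Ne.symm hb)])
      (by simp)] at this
    simpa using this
  simpa using hli.fintype_card_le_finrank

/-- A matrix with symmetric columns and rank less than the dimension of the symmetric
subspace kills a nonzero symmetric vector. -/
lemma exists_symm_kernel (B : Matrix (ι → Fin 2) (ι → Fin 2) ℂ)
    (hrank : B.rank < Fintype.card ι + 1) :
    ∃ φ : (ι → Fin 2) → ℂ, φ ≠ 0 ∧ (∀ (σ : Equiv.Perm ι) (f : ι → Fin 2), φ (f ∘ σ) = φ f)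
      ∧ B.mulVec φ = 0 := by
  classical
  let F : symmSub ι →ₗ[ℂ] ((ι → Fin 2) → ℂ) := B.mulVecLin.domRestrict (symmSub ι)
  by_cases hker : LinearMap.ker F = ⊥
  · exfalso
    have h1 : Module.finrank ℂ (symmSub ι) = Module.finrank ℂ (LinearMap.range F) := by
      have := LinearMap.finrank_range_add_finrank_ker F
      rw [hker, finrank_bot] at this
      omega
    have h2 : LinearMap.range F ≤ LinearMap.range B.mulVecLin := by
      rintro x ⟨y, rfl⟩
      exact ⟨y, rfl⟩
    have h3 : Module.finrank ℂ (LinearMap.range F) ≤ B.rank :=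
      Submodule.finrank_mono h2
    have := le_finrank_symmSub (ι := ι)
    omega
  · obtain ⟨x, hx, hx0⟩ := Submodule.exists_mem_ne_zero_of_ne_bot hker
    refine ⟨(x : (ι → Fin 2) → ℂ), ?_, x.2, ?_⟩
    · intro h
      exact hx0 (Subtype.ext h)
    · simpa [F, Matrix.mulVecLin_apply] using hx

end Symm

open Matrix

/-! ### Merging and restriction along a bipartition -/

section Merge

variable {N : ℕ}

def mrg (T : Finset (Fin N)) (z : {i : Fin N // i ∈ T} → Fin 2)
    (x : {i : Fin N // i ∉ T} → Fin 2) : QIdx N :=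
  fun i => if h : i ∈ T then z ⟨i, h⟩ else x ⟨i, h⟩

def restp (T : Finset (Fin N)) (f : QIdx N) : {i : Fin N // i ∈ T} → Fin 2 :=
  fun i => f i.val

def restn (T : Finset (Fin N)) (f : QIdx N) : {i : Fin N // i ∉ T} → Fin 2 :=
  fun i => f i.val

@[simp] lemma restp_mrg (T : Finset (Fin N)) (z : {i : Fin N // i ∈ T} → Fin 2)
    (x : {i : Fin N // i ∉ T} → Fin 2) : restp T (mrg T z x) = z := by
  funext i; simp [restp, mrg, i.2]

@[simp] lemma restn_mrg (T : Finset (Fin N)) (z : {i : Fin N // i ∈ T} → Fin 2)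
    (x : {i : Fin N // i ∉ T} → Fin 2) : restn T (mrg T z x) = x := by
  funext i; simp [restn, mrg, i.2]

lemma mrg_rest (T : Finset (Fin N)) (f : QIdx N) : mrg T (restp T f) (restn T f) = f := by
  funext i
  by_cases h : i ∈ T <;> simp [mrg, restp, restn, h]

def mrgEquiv (T : Finset (Fin N)) :
    (({i : Fin N // i ∈ T} → Fin 2) × ({i : Fin N // i ∉ T} → Fin 2)) ≃ QIdx N where
  toFun p := mrg T p.1 p.2
  invFun f := (restp T f, restn T f)
  left_inv := by rintro ⟨z, x⟩; simp
  right_inv := fun f => mrg_rest T f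

lemma sum_mrg {M : Type*} [AddCommMonoid M] (T : Finset (Fin N)) (F : QIdx N → M) :
    ∑ f, F f = ∑ z, ∑ x, F (mrg T z x) := by
  rw [← Equiv.sum_comp (mrgEquiv T) F, Fintype.sum_prod_type]
  rfl

/-- extension of a permutation of the kept indices to all indices -/
def pext (T : Finset (Fin N)) (σ : Equiv.Perm {i : Fin N // i ∉ T}) : Equiv.Perm (Fin N) :=
  Equiv.Perm.subtypeCongr (Equiv.refl {i : Fin N // i ∈ T}) σ

lemma mrg_comp (T : Finset (Fin N)) (z : {i : Fin N // i ∈ T} → Fin 2)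
    (x : {i : Fin N // i ∉ T} → Fin 2) (σ : Equiv.Perm {i : Fin N // i ∉ T}) :
    mrg T z (x ∘ σ) = (mrg T z x) ∘ (pext T σ) := by
  funext i
  by_cases h : i ∈ T
  · have h1 : pext T σ i = i := by
      simp [pext, Equiv.Perm.subtypeCongr.apply, h]
    simp [Function.comp, h1, mrg, h]
  · have h1 : pext T σ i = (σ ⟨i, h⟩ : Fin N) := by
      simp [pext, Equiv.Perm.subtypeCongr.apply, h]
    simp [Function.comp, h1, mrg, h, (σ ⟨i, h⟩).2]

/-- the product vector `|z⟩⊗|φ⟩` -/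
def wv (T : Finset (Fin N)) (z : {i : Fin N // i ∈ T} → Fin 2)
    (φ : ({i : Fin N // i ∉ T} → Fin 2) → ℂ) : QIdx N → ℂ :=
  fun f => if restp T f = z then φ (restn T f) else 0

@[simp] lemma wv_mrg (T : Finset (Fin N)) (z z' : {i : Fin N // i ∈ T} → Fin 2)
    (x : {i : Fin N // i ∉ T} → Fin 2) (φ : ({i : Fin N // i ∉ T} → Fin 2) → ℂ) :
    wv T z φ (mrg T z' x) = if z' = z then φ x else 0 := by
  simp [wv]

lemma ptrace_apply (T : Finset (Fin N)) (τ : Matrix (QIdx N) (QIdx N) ℂ)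
    (x y : {i : Fin N // i ∉ T} → Fin 2) :
    ptrace T τ x y = ∑ z, τ (mrg T z x) (mrg T z y) := rfl

lemma dot_ptrace (T : Finset (Fin N)) (τ : Matrix (QIdx N) (QIdx N) ℂ)
    (φ : ({i : Fin N // i ∉ T} → Fin 2) → ℂ) :
    star φ ⬝ᵥ (ptrace T τ).mulVec φ
      = ∑ z, star (wv T z φ) ⬝ᵥ τ.mulVec (wv T z φ) := by
  classical
  have key : ∀ z, star (wv T z φ) ⬝ᵥ τ.mulVec (wv T z φ)
      = ∑ x, ∑ y, star (φ x) * (τ (mrg T z x) (mrg T z y) * φ y) := by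
    intro z
    simp only [dotProduct, Matrix.mulVec, Pi.star_apply]
    rw [sum_mrg T (fun f => star (wv T z φ f) * ∑ g, τ f g * wv T z φ g)]
    have inner : ∀ z' x, (∑ g, τ (mrg T z' x) g * wv T z φ g)
        = ∑ y, τ (mrg T z' x) (mrg T z y) * φ y := by
      intro z' x
      rw [sum_mrg T (fun g => τ (mrg T z' x) g * wv T z φ g), Finset.sum_comm]
      simp only [wv_mrg, mul_ite, mul_zero]
      simp [Finset.sum_ite_eq']
    have step : ∀ z', (∑ x, star (wv T z φ (mrg T z' x))
          * ∑ g, τ (mrg T z' x) g * wv T z φ g)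
        = if z' = z then ∑ x, star (φ x) * ∑ y, τ (mrg T z x) (mrg T z y) * φ y
          else 0 := by
      intro z'
      by_cases h : z' = z
      · subst h
        simp only [if_pos rfl]
        apply Finset.sum_congr rfl
        intro x _
        rw [inner]
        simp [wv_mrg]
      · simp [wv_mrg, h]
    rw [Finset.sum_congr rfl fun z' _ => step z']
    rw [Finset.sum_ite_eq' Finset.univ z]
    simp [Finset.mul_sum]
  rw [Finset.sum_congr rfl fun z _ => key z]
  simp only [dotProduct, Matrix.mulVec, Pi.star_apply, ptrace_apply,
    Finset.sum_mul, Finset.mul_sum]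
  trans (∑ x, ∑ z, ∑ y, star (φ x) * (τ (mrg T z x) (mrg T z y) * φ y))
  · exact Finset.sum_congr rfl fun x _ => Finset.sum_comm
  · exact Finset.sum_comm


lemma mem_symmSub {ι : Type*} [Fintype ι] [DecidableEq ι] {ψ : (ι → Fin 2) → ℂ} :
    ψ ∈ symmSub ι ↔ ∀ (σ : Equiv.Perm ι) (f : ι → Fin 2), ψ (f ∘ σ) = ψ f := Iff.rfl

lemma ptrace_posSemidef (T : Finset (Fin N)) {τ : Matrix (QIdx N) (QIdx N) ℂ}
    (hτ : τ.PosSemidef) : (ptrace T τ).PosSemidef := by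
  have he : ∀ a b, star (τ a b) = τ b a := fun a b => congrFun (congrFun hτ.1 b) a
  apply Matrix.PosSemidef.of_dotProduct_mulVec_nonneg
  · ext x y
    show star (ptrace T τ y x) = ptrace T τ x y
    rw [ptrace_apply, ptrace_apply, star_sum]
    exact Finset.sum_congr rfl fun z _ => he _ _
  · intro x
    rw [dot_ptrace]
    exact Finset.sum_nonneg fun z _ => hτ.dotProduct_mulVec_nonneg _

lemma kernel_of_marginal (T : Finset (Fin N)) {τ : Matrix (QIdx N) (QIdx N) ℂ}
    (hτ : τ.PosSemidef) (φ : ({i : Fin N // i ∉ T} → Fin 2) → ℂ)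
    (hφ : (ptrace T τ).mulVec φ = 0) :
    ∀ z, τ.mulVec (wv T z φ) = 0 := by
  have h0 : ∑ z, star (wv T z φ) ⬝ᵥ τ.mulVec (wv T z φ) = 0 := by
    rw [← dot_ptrace, hφ, dotProduct_zero]
  have hnn : ∀ z ∈ Finset.univ, (0 : ℂ) ≤ star (wv T z φ) ⬝ᵥ τ.mulVec (wv T z φ) :=
    fun z _ => hτ.dotProduct_mulVec_nonneg _
  intro z
  have := (Finset.sum_eq_zero_iff_of_nonneg hnn).mp h0 z (Finset.mem_univ z)
  exact (hτ.dotProduct_mulVec_zero_iff _).mp this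

lemma cnt_mrg_zero (T : Finset (Fin N)) (a : {i : Fin N // i ∉ T} → Fin 2) :
    cnt (mrg T 0 a) = cnt a := by
  classical
  unfold cnt
  apply Finset.card_bij' (fun i hi => (⟨i, by
      intro hiT
      have h1 : mrg T 0 a i = 0 := by simp [mrg, hiT]
      have h2 := (Finset.mem_filter.mp hi).2
      rw [h1] at h2
      exact absurd h2 (by decide)⟩ : {i : Fin N // i ∉ T}))
    (fun j _ => j.val)
  case hi =>
    intro i hi
    simp only [Finset.mem_filter, Finset.mem_univ, true_and]
    have h2 := (Finset.mem_filter.mp hi).2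
    have h3 : i ∉ T := by
      intro hiT
      have h1 : mrg T 0 a i = 0 := by simp [mrg, hiT]
      rw [h1] at h2
      exact absurd h2 (by decide)
    rw [show mrg T 0 a i = a ⟨i, h3⟩ from by simp [mrg, h3]] at h2
    exact h2
  case hj =>
    intro j hj
    simp only [Finset.mem_filter, Finset.mem_univ, true_and]
    have h2 := (Finset.mem_filter.mp hj).2
    rw [show mrg T 0 a j.val = a j from by simp [mrg, j.2]]
    exact h2
  case left_inv => intro i hi; rfl
  case right_inv => intro j hj; rfl

lemma rank_le_of_row_kernel (ρ : Matrix (QIdx N) (QIdx N) ℂ) (hsupp : SuppSymm ρ)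
    (T : Finset (Fin N)) (ψ : ({i : Fin N // i ∉ T} → Fin 2) → ℂ)
    (hψs : ∀ (σ : Equiv.Perm {i : Fin N // i ∉ T}) f, ψ (f ∘ σ) = ψ f)
    (a0 : {i : Fin N // i ∉ T} → Fin 2) (hψ0 : ψ a0 ≠ 0)
    (hrow : ∀ d, (∑ f, wv T 0 ψ f * ρ f d) = 0) : ρ.rank ≤ N := by
  classical
  set u := wv T 0 ψ with hu
  let L : (QIdx N → ℂ) →ₗ[ℂ] ℂ :=
    { toFun := fun v => ∑ f, u f * v f
      map_add' := by intro a b; simp [mul_add, Finset.sum_add_distrib]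
      map_smul' := by
        intro c a
        simp only [smul_eq_mul, RingHom.id_apply, Pi.smul_apply]
        rw [Finset.mul_sum]
        exact Finset.sum_congr rfl fun f _ => by ring }
  set V := symmSub (Fin N) ⊓ LinearMap.ker L with hV
  have hrange : LinearMap.range ρ.mulVecLin ≤ V := by
    rintro _ ⟨v, rfl⟩
    rw [Matrix.mulVecLin_apply]
    refine Submodule.mem_inf.mpr ⟨mem_symmSub.mpr (hsupp v), ?_⟩
    show (∑ f, u f * ρ.mulVec v f) = 0
    simp only [Matrix.mulVec, dotProduct, Finset.mul_sum]
    rw [Finset.sum_comm]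
    have : ∀ g, (∑ f, u f * (ρ f g * v g)) = 0 := by
      intro g
      have h1 : (∑ f, u f * (ρ f g * v g)) = (∑ f, u f * ρ f g) * v g := by
        rw [Finset.sum_mul]
        exact Finset.sum_congr rfl fun f _ => by ring
      rw [h1, hrow g, zero_mul]
    rw [Finset.sum_congr rfl fun g _ => this g]
    simp
  set k0 := cnt a0 with hk0
  set v0 : QIdx N → ℂ := fun f => if cnt f = k0 then 1 else 0 with hv0
  have hv0symm : v0 ∈ symmSub (Fin N) := mem_symmSub.mpr fun σ f => by
    simp [hv0, cnt_comp f σ]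
  have hLv0 : L v0 ≠ 0 := by
    have h1 : L v0 = ∑ a, ψ a * v0 (mrg T 0 a) := by
      show (∑ f, u f * v0 f) = _
      rw [sum_mrg T (fun f => u f * v0 f)]
      simp only [hu, wv_mrg, ite_mul, zero_mul]
      rw [Finset.sum_comm]
      simp [Finset.sum_ite_eq']
    have h2 : L v0 = ∑ a ∈ Finset.univ.filter (fun a => cnt a = k0), ψ a := by
      rw [h1, Finset.sum_filter]
      apply Finset.sum_congr rfl
      intro a _
      by_cases h : cnt a = k0 <;> simp [hv0, cnt_mrg_zero, h]
    have h3 : ∀ a ∈ Finset.univ.filter (fun a => cnt a = k0), ψ a = ψ a0 := by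
      intro a ha
      have hc : cnt a0 = cnt a := ((Finset.mem_filter.mp ha).2).symm
      obtain ⟨σ, hσ⟩ := exists_perm_of_cnt_eq hc
      rw [← hσ, hψs]
    rw [h2, Finset.sum_congr rfl h3, Finset.sum_const]
    have hcard : (Finset.univ.filter (fun a => cnt a = k0)).card ≠ 0 :=
      Finset.card_ne_zero_of_mem (Finset.mem_filter.mpr ⟨Finset.mem_univ a0, rfl⟩)
    simp only [nsmul_eq_mul]
    exact mul_ne_zero (Nat.cast_ne_zero.mpr hcard) hψ0
  have hlt : V < symmSub (Fin N) := by
    refine lt_of_le_of_ne inf_le_left ?_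
    intro h
    rw [← h] at hv0symm
    exact hLv0 (Submodule.mem_inf.mp hv0symm).2
  have h2 : ρ.rank ≤ Module.finrank ℂ V := Submodule.finrank_mono hrange
  have h3 : Module.finrank ℂ V < Module.finrank ℂ (symmSub (Fin N)) :=
    Submodule.finrank_lt_finrank_of_lt hlt
  have h4 := finrank_symmSub_le (ι := Fin N)
  rw [Fintype.card_fin] at h4
  omega

end Merge

/-- for an `N`-qubit PPT symmetric state `ρ`, if for some bipartition
`S|S̄` the partial transpose `ρ^{T_S}` is not supported on `ℂ^{|S|+1} ⊗ ℂ^{N-|S|+1}`,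
i.e. one of its marginals has a nontrivial kernel (rank below the dimension of the
corresponding symmetric subspace), then `rank ρ ≤ N`. -/
theorem stmt10 (N : ℕ) (ρ : Matrix (QIdx N) (QIdx N) ℂ)
    (hPSD : ρ.PosSemidef) (hsupp : SuppSymm ρ)
    (hPPT : ∀ S : Finset (Fin N), (ptTrans S ρ).PosSemidef)
    (S : Finset (Fin N))
    (hker : (ptrace Sᶜ (ptTrans S ρ)).rank < S.card + 1 ∨
            (ptrace S (ptTrans S ρ)).rank < N - S.card + 1) :
    ρ.rank ≤ N := by
  classical
  have hherm : ∀ a b, star (ρ a b) = ρ b a := fun a b => congrFun (congrFun hPSD.1 b) a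
  rcases hker with hk1 | hk2
  · -- kernel in the marginal on S
    have hcard1 : Fintype.card {i : Fin N // i ∉ Sᶜ} = S.card := by
      rw [Fintype.card_congr (Equiv.subtypeEquivRight (q := fun i => i ∈ S)
        (fun i => by simp))]
      exact Fintype.card_coe S
    obtain ⟨φ, hφ0, hφs, hφk⟩ := exists_symm_kernel (ptrace Sᶜ (ptTrans S ρ))
      (by rw [hcard1]; exact hk1)
    have hz := kernel_of_marginal Sᶜ (hPPT S) φ hφk
    have hent : ∀ (d : QIdx N) (b : {i : Fin N // i ∉ Sᶜ} → Fin 2),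
        ptTrans S ρ (mrg Sᶜ 0 (restn Sᶜ d)) (mrg Sᶜ (restp Sᶜ d) b)
          = ρ (mrg Sᶜ 0 b) d := by
      intro d b
      show ρ _ _ = _
      congr 1
      · funext i
        by_cases hi : i ∈ S <;>
          simp [mrg, restp, restn, Finset.mem_compl, hi]
      · funext i
        by_cases hi : i ∈ S <;>
          simp [mrg, restp, restn, Finset.mem_compl, hi]
    have hconv : ∀ d : QIdx N, (∑ b, φ b * ρ (mrg Sᶜ 0 b) d) = 0 := by
      intro d
      have h := congrFun (hz (restp Sᶜ d)) (mrg Sᶜ 0 (restn Sᶜ d))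
      simp only [Matrix.mulVec, dotProduct, Pi.zero_apply] at h
      rw [sum_mrg Sᶜ (fun g => ptTrans S ρ (mrg Sᶜ 0 (restn Sᶜ d)) g
        * wv Sᶜ (restp Sᶜ d) φ g)] at h
      simp only [wv_mrg, mul_ite, mul_zero] at h
      rw [Finset.sum_comm] at h
      simp only [Finset.sum_ite_eq', Finset.mem_univ, if_true] at h
      rw [← h]
      apply Finset.sum_congr rfl
      intro b _
      rw [hent d b]
      ring
    have hrow : ∀ d, (∑ f, wv Sᶜ 0 φ f * ρ f d) = 0 := by
      intro d
      rw [sum_mrg Sᶜ (fun f => wv Sᶜ 0 φ f * ρ f d)]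
      simp only [wv_mrg, ite_mul, zero_mul]
      rw [Finset.sum_comm]
      simp only [Finset.sum_ite_eq', Finset.mem_univ, if_true]
      exact hconv d
    obtain ⟨a0, ha0⟩ := Function.ne_iff.mp hφ0
    exact rank_le_of_row_kernel ρ hsupp Sᶜ φ hφs a0 (by simpa using ha0) hrow
  · -- kernel in the marginal on the complement of S
    have hcard2 : Fintype.card {i : Fin N // i ∉ S} = N - S.card := by
      rw [Fintype.card_subtype_compl, Fintype.card_fin, Fintype.card_coe]
    obtain ⟨φ, hφ0, hφs, hφk⟩ := exists_symm_kernel (ptrace S (ptTrans S ρ))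
      (by rw [hcard2]; exact hk2)
    have hM2 : ptrace S (ptTrans S ρ) = ptrace S ρ := by
      ext x y
      rw [ptrace_apply, ptrace_apply]
      apply Finset.sum_congr rfl
      intro z _
      show ρ _ _ = _
      congr 1
      · funext i
        by_cases hi : i ∈ S <;> simp [mrg, hi]
      · funext i
        by_cases hi : i ∈ S <;> simp [mrg, hi]
    rw [hM2] at hφk
    have hz := kernel_of_marginal S hPSD φ hφk
    set ψ : ({i : Fin N // i ∉ S} → Fin 2) → ℂ := fun a => star (φ a) with hψ
    have hψs : ∀ (σ : Equiv.Perm {i : Fin N // i ∉ S}) f, ψ (f ∘ σ) = ψ f := by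
      intro σ f
      simp [hψ, hφs σ f]
    have hrow : ∀ d, (∑ f, wv S 0 ψ f * ρ f d) = 0 := by
      intro d
      have h := congrFun (hz 0) d
      simp only [Matrix.mulVec, dotProduct, Pi.zero_apply] at h
      have hst : (∑ f, wv S 0 ψ f * ρ f d) = star (∑ f, ρ d f * wv S 0 φ f) := by
        rw [star_sum]
        apply Finset.sum_congr rfl
        intro f _
        rw [star_mul', hherm]
        have : star (wv S 0 φ f) = wv S 0 ψ f := by
          simp only [wv, hψ, apply_ite (star : ℂ → ℂ), star_zero]
        rw [this]
        ring
      rw [hst, h, star_zero]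
    obtain ⟨a0, ha0⟩ := Function.ne_iff.mp hφ0
    have ha0' : ψ a0 ≠ 0 := by simpa [hψ] using ha0
    exact rank_le_of_row_kernel ρ hsupp S ψ hψs a0 ha0' hrow
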